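/- If f1 ≠ f2 (on a set of positive μ-measure), then φ(θ) = ∫ f1^{1-θ} f2^{θ} dμ < 1 for all θ ∈ (0,1), and φ is strictly convex on (0,1); consequently φ attains its minimum at a unique θ0 ∈ (0,1) with φ(θ0) < 1. -/

import Mathlib

open MeasureTheory

/-- Pointwise strict convexity of `θ ↦ a^(1-θ) b^θ` for positive `a b`. -/
lemma pw_key (a b : ℝ) (ha : 0 < a) (hb : 0 < b) (s t x y : ℝ)
    (hs : 0 < s) (ht : 0 < t) (hst : s + t = 1) :
    a ^ (1 - (s * x + t * y)) * b ^ (s * x + t * y)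
      ≤ s * (a ^ (1 - x) * b ^ x) + t * (a ^ (1 - y) * b ^ y) ∧
    (a ≠ b → x ≠ y →
      a ^ (1 - (s * x + t * y)) * b ^ (s * x + t * y)
        < s * (a ^ (1 - x) * b ^ x) + t * (a ^ (1 - y) * b ^ y)) := by
  have key : ∀ θ : ℝ, a ^ (1 - θ) * b ^ θ
      = Real.exp (Real.log a + θ * (Real.log b - Real.log a)) := by
    intro θ
    rw [Real.rpow_def_of_pos ha, Real.rpow_def_of_pos hb, ← Real.exp_add]
    ring_nf
  have haff : Real.log a + (s * x + t * y) * (Real.log b - Real.log a)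
      = s * (Real.log a + x * (Real.log b - Real.log a))
        + t * (Real.log a + y * (Real.log b - Real.log a)) := by
    have : s = 1 - t := by linarith
    subst this; ring
  constructor
  · rw [key, key, key, haff]
    calc Real.exp (s * (Real.log a + x * (Real.log b - Real.log a))
        + t * (Real.log a + y * (Real.log b - Real.log a)))
        ≤ s * Real.exp (Real.log a + x * (Real.log b - Real.log a))
          + t * Real.exp (Real.log a + y * (Real.log b - Real.log a)) := by
          have := convexOn_exp.2 (Set.mem_univ (Real.log a + x * (Real.log b - Real.log a)))
            (Set.mem_univ (Real.log a + y * (Real.log b - Real.log a))) hs.le ht.le hst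
          simpa using this
      _ = _ := rfl
  · intro hab hxy
    rw [key, key, key, haff]
    have hLne : Real.log a + x * (Real.log b - Real.log a)
        ≠ Real.log a + y * (Real.log b - Real.log a) := by
      have hlog : Real.log b - Real.log a ≠ 0 := by
        intro h
        apply hab
        have : Real.log a = Real.log b := by linarith
        calc a = Real.exp (Real.log a) := (Real.exp_log ha).symm
          _ = Real.exp (Real.log b) := by rw [this]
          _ = b := Real.exp_log hb
      intro h
      apply hxy
      have := sub_eq_zero.mpr h
      have h2 : (x - y) * (Real.log b - Real.log a) = 0 := by linarith [this]; 
      rcases mul_eq_zero.mp h2 with h3 | h3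
      · linarith
      · exact absurd h3 hlog
    have := strictConvexOn_exp.2 (Set.mem_univ (Real.log a + x * (Real.log b - Real.log a)))
      (Set.mem_univ (Real.log a + y * (Real.log b - Real.log a))) hLne hs ht hst
    simpa using this

/-- Strict integral inequality given strict pointwise inequality on a set of positive measure. -/
lemma int_strict {α : Type*} [MeasurableSpace α] (μ : Measure α)
    {f1 f2 F G : α → ℝ} (hFi : Integrable F μ) (hGi : Integrable G μ)
    (hle : ∀ x, F x ≤ G x) (hlt : ∀ x, f1 x ≠ f2 x → F x < G x)
    (hne : μ {x | f1 x ≠ f2 x} ≠ 0) :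
    ∫ x, F x ∂μ < ∫ x, G x ∂μ := by
  have hsub : Integrable (fun x => G x - F x) μ := hGi.sub hFi
  have hpos : 0 < ∫ x, (G x - F x) ∂μ := by
    rw [integral_pos_iff_support_of_nonneg_ae
      (Filter.Eventually.of_forall (fun x => sub_nonneg.mpr (hle x))) hsub]
    have hsubset : {x | f1 x ≠ f2 x} ⊆ Function.support (fun x => G x - F x) := by
      intro x hx
      exact ne_of_gt (sub_pos.mpr (hlt x hx))
    calc (0 : ENNReal) < μ {x | f1 x ≠ f2 x} := (zero_le : (0 : ENNReal) ≤ μ {x | f1 x ≠ f2 x}).lt_of_ne (Ne.symm hne)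
      _ ≤ _ := measure_mono hsubset
  have := integral_sub hGi hFi
  rw [this] at hpos
  linarith
theorem stmt_3 {α : Type*} [MeasurableSpace α] (μ : Measure α) [SigmaFinite μ]
    (f1 f2 : α → ℝ) (hf1meas : Measurable f1) (hf2meas : Measurable f2)
    (hf1pos : ∀ x, 0 < f1 x) (hf2pos : ∀ x, 0 < f2 x)
    (hf1prob : ∫ x, f1 x ∂μ = 1) (hf2prob : ∫ x, f2 x ∂μ = 1)
    (hne : μ {x | f1 x ≠ f2 x} ≠ 0)
    (φ : ℝ → ℝ) (hφ : ∀ θ, φ θ = ∫ x, (f1 x) ^ (1 - θ) * (f2 x) ^ θ ∂μ)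
    (hint : ∀ θ ∈ Set.Icc (0:ℝ) 1,
      Integrable (fun x => (f1 x) ^ (1 - θ) * (f2 x) ^ θ) μ) :
    (∀ θ ∈ Set.Ioo (0:ℝ) 1, φ θ < 1) ∧
    StrictConvexOn ℝ (Set.Ioo (0:ℝ) 1) φ ∧
    (∃! θ0 : ℝ, θ0 ∈ Set.Ioo (0:ℝ) 1 ∧ IsMinOn φ (Set.Ioo (0:ℝ) 1) θ0) ∧
    (∀ θ0 : ℝ, θ0 ∈ Set.Ioo (0:ℝ) 1 → IsMinOn φ (Set.Ioo (0:ℝ) 1) θ0 → φ θ0 < 1) := by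
  have hf1int : Integrable f1 μ := by
    have := hint 0 ⟨le_refl 0, zero_le_one⟩
    simpa [Real.rpow_zero, Real.rpow_one] using this
  have hf2int : Integrable f2 μ := by
    have := hint 1 ⟨zero_le_one, le_refl 1⟩
    simpa [Real.rpow_zero, Real.rpow_one] using this
  have hφ0 : φ 0 = 1 := by
    rw [hφ]; simpa [Real.rpow_zero, Real.rpow_one] using hf1prob
  have hφ1 : φ 1 = 1 := by
    rw [hφ]; simpa [Real.rpow_zero, Real.rpow_one] using hf2prob
  -- Part 1: φ θ < 1 on (0,1)
  have part1 : ∀ θ ∈ Set.Ioo (0:ℝ) 1, φ θ < 1 := by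
    intro θ hθ
    rw [hφ]
    have hGi : Integrable (fun x => (1 - θ) * f1 x + θ * f2 x) μ :=
      (hf1int.const_mul _).add (hf2int.const_mul _)
    have hle : ∀ x, f1 x ^ (1 - θ) * f2 x ^ θ ≤ (1 - θ) * f1 x + θ * f2 x := by
      intro x
      have := (pw_key (f1 x) (f2 x) (hf1pos x) (hf2pos x) (1 - θ) θ 0 1
        (by linarith [hθ.2]) hθ.1 (by ring)).1
      simpa [Real.rpow_zero, Real.rpow_one] using this
    have hlt : ∀ x, f1 x ≠ f2 x → f1 x ^ (1 - θ) * f2 x ^ θ < (1 - θ) * f1 x + θ * f2 x := by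
      intro x hx
      have := (pw_key (f1 x) (f2 x) (hf1pos x) (hf2pos x) (1 - θ) θ 0 1
        (by linarith [hθ.2]) hθ.1 (by ring)).2 hx (by norm_num)
      simpa [Real.rpow_zero, Real.rpow_one] using this
    have hlt' := int_strict μ (hint θ (Set.Ioo_subset_Icc_self hθ)) hGi hle hlt hne
    have hG : ∫ x, ((1 - θ) * f1 x + θ * f2 x) ∂μ = 1 := by
      rw [integral_add (hf1int.const_mul _) (hf2int.const_mul _),
        integral_const_mul, integral_const_mul, hf1prob, hf2prob]
      ring
    linarith
  -- Part 2: strict convexity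
  have part2 : StrictConvexOn ℝ (Set.Ioo (0:ℝ) 1) φ := by
    refine ⟨convex_Ioo 0 1, ?_⟩
    intro x hx y hy hxy a b ha hb hab
    simp only [smul_eq_mul]
    have hmem : a * x + b * y ∈ Set.Ioo (0:ℝ) 1 := by
      have := (convex_Ioo (0:ℝ) 1) hx hy ha.le hb.le hab
      simpa using this
    rw [hφ, hφ, hφ]
    have hFi := hint (a * x + b * y) (Set.Ioo_subset_Icc_self hmem)
    have hGi : Integrable (fun z => a * (f1 z ^ (1 - x) * f2 z ^ x)
        + b * (f1 z ^ (1 - y) * f2 z ^ y)) μ :=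
      ((hint x (Set.Ioo_subset_Icc_self hx)).const_mul _).add
        ((hint y (Set.Ioo_subset_Icc_self hy)).const_mul _)
    have hle : ∀ z, f1 z ^ (1 - (a * x + b * y)) * f2 z ^ (a * x + b * y)
        ≤ a * (f1 z ^ (1 - x) * f2 z ^ x) + b * (f1 z ^ (1 - y) * f2 z ^ y) :=
      fun z => (pw_key (f1 z) (f2 z) (hf1pos z) (hf2pos z) a b x y ha hb hab).1
    have hlt : ∀ z, f1 z ≠ f2 z → f1 z ^ (1 - (a * x + b * y)) * f2 z ^ (a * x + b * y)
        < a * (f1 z ^ (1 - x) * f2 z ^ x) + b * (f1 z ^ (1 - y) * f2 z ^ y) :=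
      fun z hz => (pw_key (f1 z) (f2 z) (hf1pos z) (hf2pos z) a b x y ha hb hab).2 hz hxy
    have hlt' := int_strict μ hFi hGi hle hlt hne
    have hG : ∫ z, (a * (f1 z ^ (1 - x) * f2 z ^ x) + b * (f1 z ^ (1 - y) * f2 z ^ y)) ∂μ
        = a * ∫ z, f1 z ^ (1 - x) * f2 z ^ x ∂μ + b * ∫ z, f1 z ^ (1 - y) * f2 z ^ y ∂μ := by
      rw [integral_add ((hint x (Set.Ioo_subset_Icc_self hx)).const_mul _)
        ((hint y (Set.Ioo_subset_Icc_self hy)).const_mul _),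
        integral_const_mul, integral_const_mul]
    linarith
  -- Continuity of φ on [0,1]
  have hcont : ContinuousOn φ (Set.Icc (0:ℝ) 1) := by
    have hφfun : φ = fun θ => ∫ x, (f1 x) ^ (1 - θ) * (f2 x) ^ θ ∂μ := funext hφ
    rw [hφfun]
    apply continuousOn_of_dominated (bound := fun x => f1 x + f2 x)
    · intro θ hθ; exact (hint θ hθ).aestronglyMeasurable
    · intro θ hθ
      filter_upwards with x
      have h1 := (hf1pos x).le
      have h2 := (hf2pos x).le
      have hbd : f1 x ^ (1 - θ) * f2 x ^ θ ≤ (1 - θ) * f1 x + θ * f2 x :=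
        Real.geom_mean_le_arith_mean2_weighted (by linarith [hθ.2]) hθ.1 h1 h2 (by ring)
      have hnn : 0 ≤ f1 x ^ (1 - θ) * f2 x ^ θ :=
        mul_nonneg (Real.rpow_nonneg h1 _) (Real.rpow_nonneg h2 _)
      rw [Real.norm_eq_abs, abs_of_nonneg hnn]
      nlinarith [hθ.1, hθ.2]
    · exact hf1int.add hf2int
    · filter_upwards with x
      have heq : (fun θ : ℝ => f1 x ^ (1 - θ) * f2 x ^ θ)
          = fun θ => Real.exp (Real.log (f1 x) * (1 - θ)) * Real.exp (Real.log (f2 x) * θ) := by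
        funext θ
        rw [Real.rpow_def_of_pos (hf1pos x), Real.rpow_def_of_pos (hf2pos x)]
      rw [heq]
      exact Continuous.continuousOn (by continuity)
  -- Existence of minimizer
  obtain ⟨θ0, hθ0Icc, hθ0min⟩ := isCompact_Icc.exists_isMinOn
    (Set.nonempty_Icc.mpr zero_le_one) hcont
  have hhalf : φ (1/2) < 1 := part1 (1/2) ⟨by norm_num, by norm_num⟩
  have hlt1 : φ θ0 < 1 :=
    lt_of_le_of_lt (isMinOn_iff.mp hθ0min (1/2) ⟨by norm_num, by norm_num⟩) hhalf
  have hθ0Ioo : θ0 ∈ Set.Ioo (0:ℝ) 1 := by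
    refine ⟨lt_of_le_of_ne hθ0Icc.1 ?_, lt_of_le_of_ne hθ0Icc.2 ?_⟩
    · intro h; rw [← h, hφ0] at hlt1; exact lt_irrefl 1 hlt1
    · intro h; rw [h, hφ1] at hlt1; exact lt_irrefl 1 hlt1
  have hminIoo : IsMinOn φ (Set.Ioo (0:ℝ) 1) θ0 := hθ0min.on_subset Set.Ioo_subset_Icc_self
  refine ⟨part1, part2, ⟨θ0, ⟨hθ0Ioo, hminIoo⟩, ?_⟩, fun θ h _ => part1 θ h⟩
  rintro θ1 ⟨h1, h2⟩
  exact part2.eq_of_isMinOn h2 hminIoo h1 hθ0Ioo
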